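/- Let P be a finite poset partitioned into disjoint chains T1, ..., Ts with s ≥ 3, such that whenever p ∈ Tj, q ∈ Tk with j ≠ k and p < q, we have P = ↑p ∪ ↓q. Then there exist subsets R1, ..., Rn of P such that P is the ordinal sum R1 ⊕ ... ⊕ Rn, and for each i, either Ri is disjoint from some Tj, or any two elements of Ri lying in different chains Tj, Tk are incomparable. -/

import Mathlib

namespace FarleyAux

variable {P : Type*} [PartialOrder P]

/-- Two elements are incomparable. -/
def Incomp (a b : P) : Prop := ¬ a ≤ b ∧ ¬ b ≤ a

theorem Incomp.symm {a b : P} (h : Incomp a b) : Incomp b a := ⟨h.2, h.1⟩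

theorem lt_or_lt_of_not_incomp {a b : P} (hne : a ≠ b) (h : ¬ Incomp a b) :
    a < b ∨ b < a := by
  rcases not_and_or.mp h with h1 | h1
  · exact Or.inl (lt_of_le_of_ne (not_not.mp h1) hne)
  · exact Or.inr (lt_of_le_of_ne (not_not.mp h1) hne.symm)

/-- One step of the incomparability graph restricted to `C`. -/
def Step (C : Set P) (a b : P) : Prop := a ∈ C ∧ b ∈ C ∧ Incomp a b

/-- Connectivity (reachability) in the incomparability graph restricted to `C`. -/
abbrev Conn (C : Set P) : P → P → Prop := Relation.ReflTransGen (Step C)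

/-- If every neighbour of `u` (other than `z`) is also a neighbour of `z`,
then removing `u` keeps the graph connected. -/
theorem conn_remove {C : Set P} {u z : P} (hz : z ∈ C) (hzu : z ≠ u)
    (hdom : ∀ v ∈ C, Incomp u v → v ≠ z → Incomp z v)
    (hconn : ∀ a ∈ C, ∀ b ∈ C, Conn C a b) :
    ∀ a ∈ C \ {u}, ∀ b ∈ C \ {u}, Conn (C \ {u}) a b := by
  classical
  have hzC' : z ∈ C \ {u} := ⟨hz, hzu⟩
  have key : ∀ a b : P, Conn C a b →
      Conn (C \ {u}) (if a = u then z else a) (if b = u then z else b) := by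
    intro a b h
    induction h with
    | refl => exact .refl
    | @tail c d hac hstep ih =>
      obtain ⟨hcC, hdC, hcd⟩ := hstep
      by_cases hcu : c = u <;> by_cases hdu : d = u
      · subst hcu; subst hdu; exact absurd le_rfl hcd.1
      · subst hcu
        rw [if_pos rfl] at ih
        rw [if_neg hdu]
        by_cases hdz : d = z
        · subst hdz; exact ih
        · exact ih.tail ⟨hzC', ⟨hdC, hdu⟩, hdom d hdC hcd hdz⟩
      · subst hdu
        rw [if_neg hcu] at ih
        rw [if_pos rfl]
        by_cases hcz : c = z
        · subst hcz; exact ih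
        · exact ih.tail ⟨⟨hcC, hcu⟩, hzC', (hdom c hcC hcd.symm hcz).symm⟩
      · rw [if_neg hcu] at ih
        rw [if_neg hdu]
        exact ih.tail ⟨⟨hcC, hcu⟩, ⟨hdC, hdu⟩, hcd⟩
  intro a ha b hb
  have h := key a b (hconn a ha.1 b hb.1)
  rwa [if_neg (show ¬ a = u from ha.2), if_neg (show ¬ b = u from hb.2)] at h

/-- The key combinatorial lemma: if a subset `C` is connected in the
incomparability graph and meets every chain (where there are at least three
chain indices available), then `C` contains no comparable pair from two
different chains. Proof by strong induction on the size of `C`. -/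
theorem no_cross [Fintype P] {κ : Type*} (ch : P → κ)
    (hcomp : ∀ a b : P, ch a = ch b → a ≤ b ∨ b ≤ a)
    (hdd : ∀ p q : P, ch p ≠ ch q → p < q → ∀ r : P, p ≤ r ∨ r ≤ q)
    (hthree : ∀ j k : κ, ∃ l : κ, l ≠ j ∧ l ≠ k) :
    ∀ (n : ℕ) (C : Set P), C.ncard ≤ n →
      (∀ a ∈ C, ∀ b ∈ C, Conn C a b) →
      (∀ j : κ, ∃ v ∈ C, ch v = j) →
      ∀ p ∈ C, ∀ q ∈ C, p < q → ch p = ch q := by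
  classical
  intro n
  induction n with
  | zero =>
    intro C hcard _ _ p hp q _ _
    have hC : C = ∅ := (Set.ncard_eq_zero C.toFinite).mp (Nat.le_zero.mp hcard)
    rw [hC] at hp; exact absurd hp (Set.notMem_empty p)
  | succ n ih =>
    intro C hcard hconn hne p₀ hp₀ q₀ hq₀ hlt₀
    by_contra hch₀
    -- the set of tops of cross pairs in C
    set CT : Set P := {b | b ∈ C ∧ ∃ a ∈ C, a < b ∧ ch a ≠ ch b} with hCTdef
    have hCTne : CT.Nonempty := ⟨q₀, hq₀, p₀, hp₀, hlt₀, hch₀⟩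
    obtain ⟨y, hyCT, hymin'⟩ := Set.Finite.exists_minimalFor id CT CT.toFinite hCTne
    -- minimality of the cross-top y
    have ymin : ∀ b ∈ C, b < y → ∀ a ∈ C, a < b → ch a = ch b := by
      intro b hb hby a haC hab
      by_contra hcc
      have hyb : y = b := le_antisymm (hymin' (j := b) ⟨hb, a, haC, hab, hcc⟩ hby.le) hby.le
      rw [hyb] at hby; exact lt_irrefl _ hby
    obtain ⟨hyC, hxex⟩ := hyCT
    set CB : Set P := {a | a ∈ C ∧ a < y ∧ ch a ≠ ch y} with hCBdef
    have hCBne : CB.Nonempty := by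
      obtain ⟨x₁, hx₁C, hx₁⟩ := hxex
      exact ⟨x₁, hx₁C, hx₁.1, hx₁.2⟩
    obtain ⟨x, hxCB, hxmax'⟩ := Set.Finite.exists_maximalFor id CB CB.toFinite hCBne
    have xmax : ∀ a ∈ C, a < y → ch a ≠ ch y → ¬ x < a := by
      intro a haC h1 h2 hxa
      have hxa' : x = a := le_antisymm hxa.le (hxmax' (j := a) ⟨haC, h1, h2⟩ hxa.le)
      rw [hxa'] at hxa; exact lt_irrefl _ hxa
    obtain ⟨hxC, hxy, hchxy⟩ := hxCB
    -- the bottom part A and top part B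
    set A : Set P := {v | v ∈ C ∧ v ≤ y ∧ v ≠ y} with hAdef
    set B : Set P := {v | v ∈ C ∧ x ≤ v ∧ v ≠ x} with hBdef
    have cover : ∀ v ∈ C, v ∈ A ∨ v ∈ B := by
      intro v hv
      by_cases hvy : v = y
      · exact Or.inr ⟨hv, by rw [hvy]; exact hxy.le, by rw [hvy]; exact (ne_of_lt hxy).symm⟩
      · by_cases hvx : v = x
        · exact Or.inl ⟨hv, by rw [hvx]; exact hxy.le, by rw [hvx]; exact ne_of_lt hxy⟩
        · rcases hdd x y hchxy hxy v with h | h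
          · exact Or.inr ⟨hv, h, hvx⟩
          · exact Or.inl ⟨hv, h, hvy⟩
    have disj : ∀ v, v ∈ A → v ∈ B → False := by
      rintro v ⟨hvC, hvy, hvny⟩ ⟨-, hxv, hvnx⟩
      have h1 : x < v := lt_of_le_of_ne hxv (Ne.symm hvnx)
      have h2 : v < y := lt_of_le_of_ne hvy hvny
      by_cases hc : ch v = ch y
      · exact hchxy ((ymin v hvC h2 x hxC h1).trans hc)
      · exact xmax v hvC h2 hc h1
    have xA : x ∈ A := ⟨hxC, hxy.le, ne_of_lt hxy⟩
    have yB : y ∈ B := ⟨hyC, hxy.le, (ne_of_lt hxy).symm⟩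
    have nbrxA : ∀ v ∈ C, Incomp x v → v ∈ A := by
      intro v hv hi
      rcases cover v hv with h | h
      · exact h
      · exact absurd h.2.1 hi.1
    have belowx : ∀ v ∈ C, v < x → ch v = ch x :=
      fun v hv hvx => ymin x hxC hxy v hv hvx
    have F3 : ∀ u ∈ A, ∀ v ∈ A, u < v → ch u = ch v := by
      intro u hu v hv huv
      exact ymin v hv.1 (lt_of_le_of_ne hv.2.1 hv.2.2) u hu.1 huv
    -- structure of "bad edges": incomparable pairs (a,b) with a ∈ A, b ∈ B
    have badlem : ∀ a ∈ A, ∀ b ∈ B, Incomp a b →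
        a ≠ x ∧ ch a = ch y ∧ ch b = ch x ∧ Incomp b y ∧ Incomp x a := by
      intro a ha b hb hab
      have hax : a ≠ x := by
        intro h
        refine disj b (nbrxA b hb.1 ?_) hb
        rw [← h]; exact hab
      have F4a : ch a = ch y := by
        by_contra hac
        have hay : a < y := lt_of_le_of_ne ha.2.1 ha.2.2
        rcases hdd a y hac hay b with h | h
        · exact hab.1 h
        · by_cases hby : b = y
          · exact hab.1 (by rw [hby]; exact ha.2.1)
          · exact disj b ⟨hb.1, h, hby⟩ hb
      have F4b : ch b = ch x := by
        by_contra hbc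
        have hxb : x < b := lt_of_le_of_ne hb.2.1 (Ne.symm hb.2.2)
        rcases hdd x b (fun hh => hbc hh.symm) hxb a with h | h
        · exact disj a ha ⟨ha.1, h, hax⟩
        · exact hab.1 h
      have F4c : Incomp b y := by
        constructor
        · intro h
          by_cases hby : b = y
          · rw [hby] at F4b; exact hchxy F4b.symm
          · exact disj b ⟨hb.1, h, hby⟩ hb
        · intro h
          exact hab.1 (ha.2.1.trans h)
      have F4d : Incomp x a := by
        constructor
        · intro h
          exact disj a ha ⟨ha.1, h, hax⟩
        · intro h
          have h1 : a < x := lt_of_le_of_ne h hax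
          exact hchxy ((belowx a ha.1 h1).symm.trans F4a)
      exact ⟨hax, F4a, F4b, F4c, F4d⟩
    -- existence of a bad edge (connectivity: a path from x to y must cross)
    have exbad : ∃ a ∈ A, ∃ b ∈ B, Incomp a b := by
      have main : ∀ b, Conn C x b → b ∈ B → ∃ a ∈ A, ∃ b' ∈ B, Incomp a b' := by
        intro b hb
        induction hb with
        | refl => intro hxB; exact absurd rfl hxB.2.2
        | @tail c d hxc hstep ih =>
          intro hdB
          rcases cover c hstep.1 with hcA | hcB
          · exact ⟨c, hcA, d, hdB, hstep.2.2⟩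
          · exact ih hcB
      exact main y (hconn x hxC y hyC) yB
    obtain ⟨a, ha, b, hb, hab⟩ := exbad
    obtain ⟨hax, F4a, F4b, F4c, F4d⟩ := badlem a ha b hb hab
    -- elements of chains other than those of x and y lie in B
    have thirdsB : ∀ r ∈ C, ch r ≠ ch x → ch r ≠ ch y → r ∈ B := by
      intro r hr hrx hry
      rcases cover r hr with hrA | hrB
      · exfalso
        have hry' : r < y := lt_of_le_of_ne hrA.2.1 hrA.2.2
        rcases hdd r y hry hry' b with h | h
        · have hrb : r < b :=
            lt_of_le_of_ne h (fun he => hrx ((congrArg ch he).trans F4b))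
          rcases hdd r b (fun he => hrx (he.trans F4b)) hrb a with h2 | h2
          · have hra : r < a :=
              lt_of_le_of_ne h2 (fun he => hry ((congrArg ch he).trans F4a))
            exact hry ((F3 r hrA a ha hra).trans F4a)
          · exact hab.1 h2
        · exact F4c.1 h
      · exact hrB
    have AtoX : ∀ v ∈ A, ch v = ch x → v ≤ x := by
      intro v hv hc
      rcases hcomp v x hc with h | h
      · exact h
      · by_cases hvx : v = x
        · exact le_of_eq hvx
        · exact (disj v hv ⟨hv.1, h, hvx⟩).elim
    have Asplit : ∀ v ∈ A, ch v = ch x ∨ ch v = ch y := by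
      intro v hv
      by_cases h1 : ch v = ch x
      · exact Or.inl h1
      · by_cases h2 : ch v = ch y
        · exact Or.inr h2
        · exact (disj v hv (thirdsB v hv.1 h1 h2)).elim
    have bip : ∀ u ∈ A, ch u = ch x → ∀ v ∈ A, ch v = ch y → Incomp u v := by
      intro u hu hcu v hv hcv
      constructor
      · intro h
        have huv : u < v :=
          lt_of_le_of_ne h
            (fun he => hchxy ((hcu.symm.trans (congrArg ch he)).trans hcv))
        exact hchxy ((hcu.symm.trans (F3 u hu v hv huv)).trans hcv)
      · intro h
        have hvu : v < u :=
          lt_of_le_of_ne h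
            (fun he => hchxy ((hcu.symm.trans (congrArg ch he.symm)).trans hcv))
        exact hchxy ((hcu.symm.trans (F3 v hv u hu hvu).symm).trans hcv)
    -- removal helper: apply the inductive hypothesis to C \ {u}
    have remove : ∀ u ∈ C, ∀ z ∈ C, z ≠ u →
        (∀ v ∈ C, Incomp u v → v ≠ z → Incomp z v) →
        (∀ jj : κ, ∃ v ∈ C \ {u}, ch v = jj) →
        ∀ p ∈ C \ {u}, ∀ q ∈ C \ {u}, p < q → ch p ≠ ch q → False := by
      intro u hu z hz hzu hdom hne' p hp q hq hpq hchpq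
      have hconn' := conn_remove hz hzu hdom hconn
      have hcard' : (C \ {u}).ncard ≤ n := by
        have h1 : (C \ {u}).ncard < C.ncard :=
          Set.ncard_lt_ncard (Set.sdiff_singleton_ssubset.mpr hu) C.toFinite
        omega
      exact hchpq (ih (C \ {u}) hcard' hconn' hne' p hp q hq hpq)
    -- Step 1: the only element of A in the chain of x is x itself
    have DXx : ∀ v ∈ A, ch v = ch x → v = x := by
      intro v hv hcv
      by_contra hvx
      refine remove v hv.1 x hxC (Ne.symm hvx) ?_ ?_ x ⟨hxC, ?_⟩ y ⟨hyC, ?_⟩ hxy hchxy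
      · intro w hw hiw hwx
        rcases cover w hw with hwA | hwB
        · rcases Asplit w hwA with h1 | h1
          · rcases hcomp v w (hcv.trans h1.symm) with h | h
            · exact absurd h hiw.1
            · exact absurd h hiw.2
          · exact bip x xA rfl w hwA h1
        · have hvxle : v ≤ x := AtoX v hv hcv
          exact absurd (hvxle.trans hwB.2.1) hiw.1
      · intro jj
        obtain ⟨w, hwC, hwch⟩ := hne jj
        by_cases hwv : w = v
        · refine ⟨x, ⟨hxC, fun hh => hvx (Set.mem_singleton_iff.mp hh).symm⟩, ?_⟩
          rw [← hwch, hwv]; exact hcv.symm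
        · exact ⟨w, ⟨hwC, fun hh => hwv (Set.mem_singleton_iff.mp hh)⟩, hwch⟩
      · exact fun hh => hvx (Set.mem_singleton_iff.mp hh).symm
      · exact fun hh => hv.2.2 (Set.mem_singleton_iff.mp hh).symm
    -- Step 2: the part of A in the chain of y is a single element
    set AK : Set P := {v | v ∈ A ∧ ch v = ch y} with hAKdef
    have hAKne : AK.Nonempty := ⟨a, ha, F4a⟩
    obtain ⟨ahat, hahatAK, hahatmax⟩ :=
      Set.Finite.exists_maximalFor id AK AK.toFinite hAKne
    have hahattop : ∀ v ∈ AK, v ≤ ahat := by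
      intro v hv
      by_cases hve : v = ahat
      · exact le_of_eq hve
      · rcases hcomp v ahat (hv.2.trans hahatAK.2.symm) with h | h
        · exact h
        · exact hahatmax (j := v) hv h
    have AKone : ∀ v ∈ A, ch v = ch y → v = ahat := by
      intro a₀ ha₀ hc₀
      by_contra hne₀
      refine remove a₀ ha₀.1 ahat hahatAK.1.1 (Ne.symm hne₀) ?_ ?_
        x ⟨hxC, ?_⟩ y ⟨hyC, ?_⟩ hxy hchxy
      · intro w hw hiw hwahat
        rcases cover w hw with hwA | hwB
        · rcases Asplit w hwA with h1 | h1
          · have hwx : w = x := DXx w hwA h1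
            rw [hwx]
            exact (bip x xA rfl ahat hahatAK.1 hahatAK.2).symm
          · rcases hcomp a₀ w (hc₀.trans h1.symm) with h | h
            · exact absurd h hiw.1
            · exact absurd h hiw.2
        · obtain ⟨-, -, -, hwy, -⟩ := badlem a₀ ha₀ w hwB hiw
          constructor
          · intro h
            exact hiw.1 ((hahattop a₀ ⟨ha₀, hc₀⟩).trans h)
          · intro h
            exact hwy.1 (h.trans hahatAK.1.2.1)
      · intro jj
        obtain ⟨w, hwC, hwch⟩ := hne jj
        by_cases hwv : w = a₀
        · refine ⟨y, ⟨hyC, fun hh => ha₀.2.2 (Set.mem_singleton_iff.mp hh).symm⟩, ?_⟩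
          rw [← hwch, hwv]; exact hc₀.symm
        · exact ⟨w, ⟨hwC, fun hh => hwv (Set.mem_singleton_iff.mp hh)⟩, hwch⟩
      · exact fun hh =>
          hchxy ((congrArg ch (Set.mem_singleton_iff.mp hh)).trans hc₀)
      · exact fun hh => ha₀.2.2 (Set.mem_singleton_iff.mp hh).symm
    have haahat : a = ahat := AKone a ha F4a
    -- Step 3: remove x itself; a cross pair to a third chain survives
    obtain ⟨l, hlx, hly⟩ := hthree (ch x) (ch y)
    obtain ⟨r, hrC, hrch⟩ := hne l
    have hrB : r ∈ B :=
      thirdsB r hrC (by rw [hrch]; exact hlx) (by rw [hrch]; exact hly)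
    have hxr : x < r := lt_of_le_of_ne hrB.2.1 (Ne.symm hrB.2.2)
    have har : a < r := by
      rcases hdd x r (by rw [hrch]; exact fun hh => hlx hh.symm) hxr a with h | h
      · exact absurd h F4d.1
      · refine lt_of_le_of_ne h ?_
        intro he
        exact hly (F4a.symm.trans ((congrArg ch he).trans hrch)).symm
    refine remove x hxC a ha.1 hax ?_ ?_ a ⟨ha.1, ?_⟩ r ⟨hrC, ?_⟩ har ?_
    · intro w hw hiw hwa
      have hwA := nbrxA w hw hiw
      rcases Asplit w hwA with h1 | h1
      · have hwx : w = x := DXx w hwA h1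
        rw [hwx] at hiw
        exact absurd le_rfl hiw.1
      · exact absurd ((AKone w hwA h1).trans haahat.symm) hwa
    · intro jj
      obtain ⟨w, hwC, hwch⟩ := hne jj
      by_cases hwx : w = x
      · refine ⟨b, ⟨hb.1, fun hh => hb.2.2 (Set.mem_singleton_iff.mp hh)⟩, ?_⟩
        rw [← hwch, hwx]; exact F4b
      · exact ⟨w, ⟨hwC, fun hh => hwx (Set.mem_singleton_iff.mp hh)⟩, hwch⟩
    · exact fun hh => hax (Set.mem_singleton_iff.mp hh)
    · exact fun hh =>
        hlx (hrch.symm.trans (congrArg ch (Set.mem_singleton_iff.mp hh)))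
    · rw [F4a, hrch]; exact fun hh => hly hh.symm

/-! ### The global incomparability components and the rank function -/

/-- Global connectivity in the incomparability graph. -/
abbrev GConn : P → P → Prop := Relation.ReflTransGen (fun a b : P => Incomp a b)

theorem gconn_symm {a b : P} (h : GConn a b) : GConn b a := by
  induction h with
  | refl => exact .refl
  | tail _ h2 ih => exact Relation.ReflTransGen.head h2.symm ih

theorem conn_lt {a b c : P} (h : GConn a b) (hnc : ¬ GConn a c) (hlt : a < c) :
    b < c := by
  induction h with
  | refl => exact hlt
  | @tail b' d hab' hstep ih =>
    have hne : d ≠ c := fun he => hnc (he ▸ hab'.tail hstep)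
    have hni : ¬ Incomp d c := fun hi => hnc ((hab'.tail hstep).tail hi)
    rcases lt_or_lt_of_not_incomp hne hni with h1 | h1
    · exact h1
    · exact absurd (ih.trans h1).le hstep.1

theorem conn_gt {a b c : P} (h : GConn a b) (hnc : ¬ GConn a c) (hlt : c < a) :
    c < b := by
  induction h with
  | refl => exact hlt
  | @tail b' d hab' hstep ih =>
    have hne : d ≠ c := fun he => hnc (he ▸ hab'.tail hstep)
    have hni : ¬ Incomp d c := fun hi => hnc ((hab'.tail hstep).tail hi)
    rcases lt_or_lt_of_not_incomp hne hni with h1 | h1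
    · exact absurd (h1.trans ih).le hstep.2
    · exact h1

/-- Total preorder whose equivalence classes are the incomparability
components, ordered compatibly with the partial order. -/
def Le' (x y : P) : Prop := GConn x y ∨ x < y

theorem le'_refl (x : P) : Le' x x := Or.inl .refl

theorem le'_trans {x y z : P} (h1 : Le' x y) (h2 : Le' y z) : Le' x z := by
  classical
  by_cases hc : GConn x z
  · exact Or.inl hc
  · right
    rcases h1 with h1 | h1 <;> rcases h2 with h2 | h2
    · exact absurd (h1.trans h2) hc
    · exact conn_lt (gconn_symm h1) (fun hh => hc (h1.trans hh)) h2
    · exact conn_gt h2 (fun hh => hc ((gconn_symm hh).trans h2)) h1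
    · exact h1.trans h2

def Sset (x : P) : Set P := {z | Le' z x ∧ ¬ Le' x z}

/-- The rank of an element: the number of elements lying in strictly lower
incomparability components. -/
noncomputable def rank [Fintype P] (x : P) : ℕ := (Sset x).ncard

theorem Sset_congr {x y : P} (h1 : Le' x y) (h2 : Le' y x) : Sset x = Sset y := by
  ext z
  constructor
  · rintro ⟨hz1, hz2⟩
    exact ⟨le'_trans hz1 h1, fun hh => hz2 (le'_trans h1 hh)⟩
  · rintro ⟨hz1, hz2⟩
    exact ⟨le'_trans hz1 h2, fun hh => hz2 (le'_trans h2 hh)⟩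

theorem Sset_ssubset {x y : P} (h1 : Le' x y) (h2 : ¬ Le' y x) :
    Sset x ⊂ Sset y := by
  constructor
  · rintro z ⟨hz1, hz2⟩
    exact ⟨le'_trans hz1 h1, fun hh => hz2 (le'_trans h1 hh)⟩
  · intro hsub
    have hx : x ∈ Sset x := hsub ⟨h1, h2⟩
    exact hx.2 (le'_refl x)

theorem rank_congr [Fintype P] {x y : P} (h1 : Le' x y) (h2 : Le' y x) :
    rank x = rank y := by
  unfold rank; rw [Sset_congr h1 h2]

theorem rank_lt [Fintype P] {x y : P} (h1 : Le' x y) (h2 : ¬ Le' y x) :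
    rank x < rank y :=
  Set.ncard_lt_ncard (Sset_ssubset h1 h2) (Set.toFinite _)

theorem rank_lt_card [Fintype P] (x : P) : rank x < Fintype.card P := by
  have h1 : Sset x ⊂ Set.univ := by
    constructor
    · exact Set.subset_univ _
    · intro hsub
      have hx : x ∈ Sset x := hsub (Set.mem_univ x)
      exact hx.2 (le'_refl x)
  have h2 := Set.ncard_lt_ncard h1 (Set.toFinite _)
  rwa [Set.ncard_univ, Nat.card_eq_fintype_card] at h2

theorem rank_congr_conn [Fintype P] {x y : P} (h : GConn x y) : rank x = rank y :=
  rank_congr (Or.inl h) (Or.inl (gconn_symm h))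

theorem conn_of_rank_eq [Fintype P] {x y : P} (h : rank x = rank y) :
    GConn x y := by
  classical
  by_cases hc : GConn x y
  · exact hc
  · exfalso
    have hne : x ≠ y := fun he => hc (he ▸ Relation.ReflTransGen.refl)
    have hni : ¬ Incomp x y := fun hi => hc (.single hi)
    have hko : ∀ u v : P, u < v → ¬ GConn u v → rank u < rank v := by
      intro u v huv hcc
      refine rank_lt (Or.inr huv) ?_
      rintro (hh | hh)
      · exact hcc (gconn_symm hh)
      · exact absurd (huv.trans hh) (lt_irrefl _)
    rcases lt_or_lt_of_not_incomp hne hni with h1 | h1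
    · exact absurd h (Nat.ne_of_lt (hko x y h1 hc))
    · exact absurd h.symm (Nat.ne_of_lt (hko y x h1 (fun hh => hc (gconn_symm hh))))

theorem lt_of_rank_lt [Fintype P] {x y : P} (h : rank x < rank y) : x < y := by
  classical
  have hc : ¬ GConn x y := by
    intro hcc
    rw [rank_congr_conn hcc] at h; exact lt_irrefl _ h
  have hne : x ≠ y := fun he => hc (he ▸ Relation.ReflTransGen.refl)
  have hni : ¬ Incomp x y := fun hi => hc (.single hi)
  rcases lt_or_lt_of_not_incomp hne hni with h1 | h1
  · exact h1
  · exfalso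
    have h2 : rank y < rank x := by
      refine rank_lt (Or.inr h1) ?_
      rintro (hh | hh)
      · exact hc hh
      · exact absurd (h1.trans hh) (lt_irrefl _)
    omega

theorem conn_in_rank_class [Fintype P] {a b : P} (h : GConn a b) (i : ℕ)
    (hra : rank a = i) : Conn {x : P | rank x = i} a b := by
  induction h with
  | refl => exact .refl
  | @tail c d hac hstep ih =>
    have hcC : rank c = i := by rw [← hra]; exact (rank_congr_conn hac).symm
    have hdC : rank d = i := by
      rw [← hra]; exact (rank_congr_conn (hac.tail hstep)).symm
    exact ih.tail ⟨hcC, hdC, hstep⟩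

end FarleyAux

open FarleyAux in
/-- Farley's theorem (generalizing the Daykin–Daykin conjecture): if a finite
poset `P` is partitioned into disjoint chains `T 0, …, T (s-1)` with `s ≥ 3`
such that whenever `p ∈ T j`, `q ∈ T k`, `j ≠ k` and `p < q` we have
`P = ↑p ∪ ↓q`, then `P` is an ordinal sum `R 0 ⊕ ⋯ ⊕ R (n-1)` in which each
block `R i` either misses some chain `T j`, or has any two of its elements
lying in different chains incomparable. -/
theorem farley_chain_decomposition {P : Type*} [Fintype P] [PartialOrder P]
    (s : ℕ) (hs : 3 ≤ s) (T : Fin s → Set P)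
    (hchain : ∀ j, IsChain (· ≤ ·) (T j))
    (hpart : ∀ x : P, ∃! j, x ∈ T j)
    (hDD : ∀ j k, j ≠ k → ∀ p ∈ T j, ∀ q ∈ T k, p < q → ∀ r : P, p ≤ r ∨ r ≤ q) :
    ∃ (n : ℕ) (R : Fin n → Set P),
      (∀ x : P, ∃! i, x ∈ R i) ∧
      (∀ i j : Fin n, i < j → ∀ p ∈ R i, ∀ q ∈ R j, p < q) ∧
      (∀ i, (∃ j, R i ∩ T j = ∅) ∨
        ∀ j k, j ≠ k → ∀ p ∈ R i ∩ T j, ∀ q ∈ R i ∩ T k, ¬ p ≤ q ∧ ¬ q ≤ p) := by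
  classical
  -- the chain-assignment function
  set ch : P → Fin s := fun x => (hpart x).choose with hchdef
  have hch : ∀ x : P, x ∈ T (ch x) := fun x => (hpart x).choose_spec.1
  have hchu : ∀ (x : P) (j : Fin s), x ∈ T j → j = ch x :=
    fun x j h => (hpart x).choose_spec.2 j h
  have hcomp : ∀ a b : P, ch a = ch b → a ≤ b ∨ b ≤ a := by
    intro a b hab
    by_cases he : a = b
    · exact Or.inl (le_of_eq he)
    · exact hchain (ch a) (hch a) (by rw [hab]; exact hch b) he
  have hdd : ∀ p q : P, ch p ≠ ch q → p < q → ∀ r : P, p ≤ r ∨ r ≤ q :=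
    fun p q hne hpq r => hDD (ch p) (ch q) hne p (hch p) q (hch q) hpq r
  have hthree : ∀ j k : Fin s, ∃ l : Fin s, l ≠ j ∧ l ≠ k := by
    intro j k
    by_contra hcon
    push_neg at hcon
    have hsub : (Finset.univ : Finset (Fin s)) ⊆ {j, k} := by
      intro l _
      by_cases hlj : l = j
      · simp [hlj]
      · simp [hcon l hlj]
    have h1 := Finset.card_le_card hsub
    have h2 : ({j, k} : Finset (Fin s)).card ≤ 2 := by
      refine (Finset.card_insert_le _ _).trans ?_
      simp
    rw [Finset.card_univ, Fintype.card_fin] at h1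
    omega
  refine ⟨Fintype.card P, fun i => {x : P | rank x = (i : ℕ)}, ?_, ?_, ?_⟩
  · -- partition
    intro x
    refine ⟨⟨rank x, rank_lt_card x⟩, rfl, ?_⟩
    intro i hi
    exact Fin.ext ((show rank x = (i : ℕ) from hi).symm)
  · -- ordering between blocks
    intro i j hij p hp q hq
    have hij' : (i : ℕ) < (j : ℕ) := hij
    have hrpq : rank p < rank q := by
      have hp' : rank p = (i : ℕ) := hp
      have hq' : rank q = (j : ℕ) := hq
      omega
    exact lt_of_rank_lt hrpq
  · -- each block misses a chain or is cross-incomparable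
    intro i
    by_cases hmiss : ∃ j, {x : P | rank x = (i : ℕ)} ∩ T j = ∅
    · exact Or.inl hmiss
    · right
      push_neg at hmiss
      have hne' : ∀ j : Fin s, ∃ v ∈ {x : P | rank x = (i : ℕ)}, ch v = j := by
        intro j
        obtain ⟨v, hv⟩ := hmiss j
        exact ⟨v, hv.1, (hchu v j hv.2).symm⟩
      have hconn' : ∀ a ∈ {x : P | rank x = (i : ℕ)},
          ∀ b ∈ {x : P | rank x = (i : ℕ)},
          Conn {x : P | rank x = (i : ℕ)} a b := by
        intro a ha b hb
        have ha' : rank a = (i : ℕ) := ha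
        have hb' : rank b = (i : ℕ) := hb
        have hcab : GConn a b := conn_of_rank_eq (by rw [ha', hb'])
        exact conn_in_rank_class hcab (i : ℕ) ha'
      have noc := no_cross ch hcomp hdd hthree
        ({x : P | rank x = (i : ℕ)}).ncard {x : P | rank x = (i : ℕ)}
        le_rfl hconn' hne'
      intro j k hjk pp hpp qq hqq
      constructor
      · intro hle
        rcases eq_or_lt_of_le hle with he | hlt
        · exact hjk ((hchu pp j hpp.2).trans (hchu pp k (he ▸ hqq.2)).symm)
        · exact hjk (((hchu pp j hpp.2).trans
            (noc pp hpp.1 qq hqq.1 hlt)).trans (hchu qq k hqq.2).symm)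
      · intro hle
        rcases eq_or_lt_of_le hle with he | hlt
        · exact hjk ((hchu pp j hpp.2).trans (hchu pp k (he ▸ hqq.2)).symm)
        · exact hjk (((hchu pp j hpp.2).trans
            (noc qq hqq.1 pp hpp.1 hlt).symm).trans (hchu qq k hqq.2).symm)
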